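/- Let U_1,…,U_k be i.i.d. Uniform([0,1]) and let X_1 ≤ ⋯ ≤ X_k be their order statistics. Then E[∏_{a=1}^{k} X_a^{2(k-a)}] = k! / ∏_{r=1}^{k} r(2k-r) = (k-1)!/(2k-1)!. -/

import Mathlib

open MeasureTheory Finset Set

noncomputable abbrev nu : Measure ℝ := volume.restrict (Set.Icc (0:ℝ) 1)

instance : IsProbabilityMeasure nu := ⟨by simp⟩

lemma hyper (m : ℕ) (i j : Fin (m+1)) (hij : i ≠ j) :
    (Measure.pi fun _ : Fin (m+1) => nu) {u : Fin (m+1) → ℝ | u i = u j} = 0 := by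
  obtain ⟨j', hj'⟩ := Fin.exists_succAbove_eq (Ne.symm hij)
  set E := MeasurableEquiv.piFinSuccAbove (fun _ : Fin (m+1) => ℝ) i with hE
  have h1 := measurePreserving_piFinSuccAbove (fun _ : Fin (m+1) => nu) i
  have hSmeas : MeasurableSet {u : Fin (m+1) → ℝ | u i = u j} :=
    measurableSet_eq_fun (measurable_pi_apply i) (measurable_pi_apply j)
  have hpre : {u : Fin (m+1) → ℝ | u i = u j}
      = E ⁻¹' (E.symm ⁻¹' {u : Fin (m+1) → ℝ | u i = u j}) := by
    rw [← Set.preimage_comp]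
    simp
  rw [hpre, ← Measure.map_apply E.measurable (E.symm.measurable hSmeas), h1.map_eq,
    Measure.prod_apply (E.symm.measurable hSmeas)]
  have hslice : ∀ x : ℝ, (Prod.mk x ⁻¹' (E.symm ⁻¹' {u : Fin (m+1) → ℝ | u i = u j}))
      = {v : Fin m → ℝ | v j' = x} := by
    intro x
    ext v
    simp only [Set.mem_preimage, Set.mem_setOf_eq]
    have e1 : E.symm (x, v) = Fin.insertNth i x v := by
      simp [hE, MeasurableEquiv.piFinSuccAbove, Fin.insertNthEquiv]
    rw [e1, Fin.insertNth_apply_same, ← hj', Fin.insertNth_apply_succAbove]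
    exact eq_comm
  simp_rw [hslice]
  simp [Measure.pi_hyperplane]

lemma snoc_mem_iff {n : ℕ} (v : Fin n → ℝ) (x t : ℝ) :
    (StrictMono (Fin.snoc v x : Fin (n+1) → ℝ) ∧ ∀ i, (Fin.snoc v x : Fin (n+1) → ℝ) i ∈ Set.Ioo 0 t)
      ↔ (x ∈ Set.Ioo 0 t ∧ (StrictMono v ∧ ∀ i, v i ∈ Set.Ioo (0:ℝ) x)) := by
  constructor
  · rintro ⟨hm, hb⟩
    have hx := hb (Fin.last n)
    rw [Fin.snoc_last] at hx
    refine ⟨hx, fun i j hij => ?_, fun i => ?_⟩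
    · have := hm (Fin.castSucc_lt_castSucc_iff.mpr hij)
      simpa using this
    · have h1 := hb i.castSucc
      rw [Fin.snoc_castSucc] at h1
      have h2 := hm (Fin.castSucc_lt_last i)
      rw [Fin.snoc_castSucc, Fin.snoc_last] at h2
      exact ⟨h1.1, h2⟩
  · rintro ⟨hx, hm, hb⟩
    constructor
    · intro i j hij
      rcases Fin.eq_castSucc_or_eq_last j with ⟨j', rfl⟩ | rfl
      · rcases Fin.eq_castSucc_or_eq_last i with ⟨i', rfl⟩ | rfl
        · rw [Fin.snoc_castSucc, Fin.snoc_castSucc]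
          exact hm (Fin.castSucc_lt_castSucc_iff.mp hij)
        · exact absurd hij (by simp [Fin.lt_iff_val_lt_val])
      · rcases Fin.eq_castSucc_or_eq_last i with ⟨i', rfl⟩ | rfl
        · rw [Fin.snoc_castSucc, Fin.snoc_last]
          exact (hb i').2
        · exact absurd hij (lt_irrefl _)
    · intro i
      rcases Fin.eq_castSucc_or_eq_last i with ⟨i', rfl⟩ | rfl
      · rw [Fin.snoc_castSucc]
        exact ⟨(hb i').1, (hb i').2.trans hx.2⟩
      · rw [Fin.snoc_last]; exact hx



lemma measS (n : ℕ) (t : ℝ) :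
    MeasurableSet {p : ℝ × (Fin n → ℝ) | p.1 ∈ Set.Ioo 0 t ∧
      (StrictMono p.2 ∧ ∀ i, p.2 i ∈ Set.Ioo 0 p.1)} := by
  have h1 : MeasurableSet {p : ℝ × (Fin n → ℝ) | p.1 ∈ Set.Ioo 0 t} := by
    exact measurable_fst measurableSet_Ioo
  have h2 : MeasurableSet {p : ℝ × (Fin n → ℝ) | StrictMono p.2} := by
    have : {p : ℝ × (Fin n → ℝ) | StrictMono p.2} =
        ⋂ (i : Fin n) (j : Fin n) (_ : i < j), {p : ℝ × (Fin n → ℝ) | p.2 i < p.2 j} := by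
      ext p
      simp only [Set.mem_setOf_eq, Set.mem_iInter]
      exact ⟨fun h i j hij => h hij, fun h i j hij => h i j hij⟩
    rw [this]
    exact MeasurableSet.iInter fun i => MeasurableSet.iInter fun j =>
      MeasurableSet.iInter fun _ => measurableSet_lt (measurable_snd.eval) (measurable_snd.eval)
  have h3 : MeasurableSet {p : ℝ × (Fin n → ℝ) | ∀ i, p.2 i ∈ Set.Ioo 0 p.1} := by
    have : {p : ℝ × (Fin n → ℝ) | ∀ i, p.2 i ∈ Set.Ioo 0 p.1} =
        ⋂ i : Fin n, ({p : ℝ × (Fin n → ℝ) | 0 < p.2 i} ∩ {p | p.2 i < p.1}) := by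
      ext p
      simp only [Set.mem_setOf_eq, Set.mem_iInter, Set.mem_inter_iff, Set.mem_Ioo]
    rw [this]
    exact MeasurableSet.iInter fun i =>
      (measurableSet_lt measurable_const (measurable_snd.eval)).inter
        (measurableSet_lt (measurable_snd.eval) measurable_fst)
  have : {p : ℝ × (Fin n → ℝ) | p.1 ∈ Set.Ioo 0 t ∧
      (StrictMono p.2 ∧ ∀ i, p.2 i ∈ Set.Ioo 0 p.1)} =
      {p : ℝ × (Fin n → ℝ) | p.1 ∈ Set.Ioo 0 t} ∩
        ({p : ℝ × (Fin n → ℝ) | StrictMono p.2} ∩ {p | ∀ i, p.2 i ∈ Set.Ioo 0 p.1}) := by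
    ext p; simp only [Set.mem_setOf_eq, Set.mem_inter_iff]
  rw [this]
  exact h1.inter (h2.inter h3)


set_option maxHeartbeats 1000000 in
lemma claim (k : ℕ) : ∀ n : ℕ, n ≤ k → ∀ t : ℝ, t ∈ Set.Icc (0:ℝ) 1 →
    (∫ u : Fin n → ℝ, Set.indicator {u : Fin n → ℝ | StrictMono u ∧ ∀ i, u i ∈ Set.Ioo 0 t}
        (fun u => ∏ i : Fin n, u i ^ (2 * (k - (i.1 + 1)))) u
        ∂(Measure.pi fun _ : Fin n => nu)) =
      t ^ (n * (2*k - n)) / ∏ r ∈ Finset.Icc 1 n, ((r : ℝ) * (2 * k - r)) := by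
  intro n
  induction n with
  | zero =>
    intro _ t ht
    have hset : {u : Fin 0 → ℝ | StrictMono u ∧ ∀ i, u i ∈ Set.Ioo 0 t} = Set.univ := by
      ext u
      simp only [Set.mem_setOf_eq, Set.mem_univ, iff_true]
      exact ⟨fun a b h => a.elim0, fun i => i.elim0⟩
    rw [hset]
    simp
  | succ n IH =>
    intro hn t ht
    have hn' : n ≤ k := by omega
    set c : ℕ := 2 * (k - (n + 1)) with hc
    set Dn : ℝ := ∏ r ∈ Finset.Icc 1 n, ((r : ℝ) * (2 * k - r)) with hDn
    set Q : (Fin n → ℝ) → ℝ := fun v => ∏ i : Fin n, v i ^ (2 * (k - (i.1 + 1))) with hQ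
    set A : ℝ → Set (Fin n → ℝ) := fun s => {v | StrictMono v ∧ ∀ i, v i ∈ Set.Ioo 0 s} with hA
    set S : Set (ℝ × (Fin n → ℝ)) := {p | p.1 ∈ Set.Ioo 0 t ∧ p.2 ∈ A p.1} with hS
    set g : ℝ × (Fin n → ℝ) → ℝ := fun p => p.1 ^ c * Q p.2 with hg
    set F : (Fin (n+1) → ℝ) → ℝ :=
      Set.indicator {u : Fin (n+1) → ℝ | StrictMono u ∧ ∀ i, u i ∈ Set.Ioo 0 t}
        (fun u => ∏ i : Fin (n+1), u i ^ (2 * (k - (i.1 + 1)))) with hF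
    set e : (Fin (n+1) → ℝ) ≃ᵐ ℝ × (Fin n → ℝ) :=
      MeasurableEquiv.piFinSuccAbove (fun _ : Fin (n+1) => ℝ) (Fin.last n) with he
    have h1 := measurePreserving_piFinSuccAbove (fun _ : Fin (n+1) => nu) (Fin.last n)
    have h2 : MeasurePreserving e.symm (nu.prod (Measure.pi fun _ : Fin n => nu))
        (Measure.pi fun _ : Fin (n+1) => nu) := MeasurePreserving.symm _ h1
    have key : (∫ p, F (e.symm p) ∂(nu.prod (Measure.pi fun _ : Fin n => nu))) =
        ∫ u, F u ∂(Measure.pi fun _ : Fin (n+1) => nu) :=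
      h2.integral_comp (MeasurableEquiv.measurableEmbedding _) F
    -- pointwise identification
    have hpt : ∀ p : ℝ × (Fin n → ℝ), F (e.symm p) = S.indicator g p := by
      rintro ⟨x, v⟩
      have hsymm : e.symm (x, v) = Fin.snoc v x := by
        simp [he, MeasurableEquiv.piFinSuccAbove, Fin.insertNthEquiv, Fin.insertNth_last]
      rw [hsymm, hF]
      have hmem : (Fin.snoc v x : Fin (n+1) → ℝ) ∈
          {u : Fin (n+1) → ℝ | StrictMono u ∧ ∀ i, u i ∈ Set.Ioo 0 t} ↔ (x, v) ∈ S := by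
        rw [Set.mem_setOf_eq, snoc_mem_iff]
        rfl
      have hprod : ∏ i : Fin (n+1), (Fin.snoc v x : Fin (n+1) → ℝ) i ^ (2 * (k - (i.1 + 1)))
          = g (x, v) := by
        rw [Fin.prod_univ_castSucc]
        simp only [Fin.snoc_castSucc, Fin.snoc_last, Fin.coe_castSucc, Fin.val_last]
        rw [hg, hQ]
        ring
      by_cases hmm : (x, v) ∈ S
      · rw [Set.indicator_of_mem (hmem.mpr hmm), Set.indicator_of_mem hmm, hprod]
      · rw [Set.indicator_of_notMem (fun hh => hmm (hmem.mp hh)),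
          Set.indicator_of_notMem hmm]
    -- measurability of S and g
    have hSm : MeasurableSet S := by
      rw [hS, hA]
      exact measS n t
    have hgm : Measurable g := by
      apply Measurable.mul
      · exact measurable_fst.pow_const c
      · exact Finset.measurable_prod _ fun i _ =>
          ((measurable_pi_apply i).comp measurable_snd).pow_const _
    -- bound
    have hbd : ∀ p : ℝ × (Fin n → ℝ), ‖S.indicator g p‖ ≤ 1 := by
      rintro ⟨x, v⟩
      by_cases hmm : (x, v) ∈ S
      · rw [Set.indicator_of_mem hmm]
        obtain ⟨hx, hsm, hb⟩ := hmm
        have hx1 : x ≤ 1 := (hx.2.le.trans ht.2)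
        have habs : |g (x, v)| ≤ 1 := by
          rw [abs_mul]
          have h1 : |x ^ c| ≤ 1 := by
            rw [abs_pow, abs_of_pos hx.1]
            exact pow_le_one₀ hx.1.le hx1
          have h2 : |Q v| ≤ 1 := by
            rw [hQ, abs_prod]
            apply Finset.prod_le_one
            · intro i _; positivity
            · intro i _
              rw [abs_pow, abs_of_pos (hb i).1]
              exact pow_le_one₀ (hb i).1.le (((hb i).2.le.trans hx.2.le).trans ht.2)
          calc |x ^ c| * |Q v| ≤ 1 * 1 := mul_le_mul h1 h2 (abs_nonneg _) zero_le_one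
          _ = 1 := by ring
        exact habs
      · rw [Set.indicator_of_notMem hmm]; simp
    have hInt : Integrable (S.indicator g) (nu.prod (Measure.pi fun _ : Fin n => nu)) := by
      refine ⟨((hgm.indicator hSm).aestronglyMeasurable), ?_⟩
      exact HasFiniteIntegral.of_bounded (C := 1) (Filter.Eventually.of_forall hbd)
    -- inner integral
    have hinner : ∀ x : ℝ, (∫ v, S.indicator g (x, v) ∂(Measure.pi fun _ : Fin n => nu)) =
        Set.indicator (Set.Ioo 0 t)
          (fun x => x ^ (c + n * (2*k - n)) / Dn) x := by
      intro x
      by_cases hx : x ∈ Set.Ioo 0 t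
      · have heq : ∀ v, S.indicator g (x, v) = x ^ c * (A x).indicator Q v := by
          intro v
          by_cases hv : v ∈ A x
          · rw [Set.indicator_of_mem (show (x, v) ∈ S from ⟨hx, hv⟩), Set.indicator_of_mem hv]
          · rw [Set.indicator_of_notMem (fun hh => hv hh.2), Set.indicator_of_notMem hv,
              mul_zero]
        simp_rw [heq]
        rw [integral_const_mul]
        rw [IH hn' x ⟨hx.1.le, hx.2.le.trans ht.2⟩]
        rw [Set.indicator_of_mem hx, pow_add]
        ring
      · have heq : ∀ v, S.indicator g (x, v) = 0 := by
          intro v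
          exact Set.indicator_of_notMem (fun hh => hx hh.1) _
        simp_rw [heq]
        rw [integral_zero, Set.indicator_of_notMem hx]
    -- put together
    rw [← key]
    calc (∫ p, F (e.symm p) ∂(nu.prod (Measure.pi fun _ : Fin n => nu)))
        = ∫ p, S.indicator g p ∂(nu.prod (Measure.pi fun _ : Fin n => nu)) := by
          exact integral_congr_ae (Filter.Eventually.of_forall hpt)
      _ = ∫ x, (∫ v, S.indicator g (x, v) ∂(Measure.pi fun _ : Fin n => nu)) ∂nu := by
          exact integral_prod _ hInt
      _ = ∫ x, Set.indicator (Set.Ioo 0 t) (fun x => x ^ (c + n * (2*k - n)) / Dn) x ∂nu := by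
          exact integral_congr_ae (Filter.Eventually.of_forall fun x => hinner x)
      _ = ∫ x in Set.Ioo 0 t, x ^ (c + n * (2*k - n)) / Dn ∂nu := by
          rw [integral_indicator measurableSet_Ioo]
      _ = ∫ x in Set.Ioo 0 t, x ^ (c + n * (2*k - n)) / Dn ∂volume := by
          have hI : Set.Ioo 0 t ∩ Set.Icc (0:ℝ) 1 = Set.Ioo 0 t :=
            Set.inter_eq_left.mpr (fun y hy => ⟨hy.1.le, hy.2.le.trans ht.2⟩)
          rw [Measure.restrict_restrict measurableSet_Ioo, hI]
      _ = (∫ x in Set.Ioo 0 t, x ^ (c + n * (2*k - n)) ∂volume) / Dn := by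
          rw [integral_div]
      _ = (t ^ (c + n * (2*k - n) + 1) / (((c + n * (2*k - n) : ℕ) : ℝ) + 1)) / Dn := by
          rw [← integral_Ioc_eq_integral_Ioo, ← intervalIntegral.integral_of_le ht.1,
            integral_pow]
          rw [zero_pow (by omega), sub_zero]
      _ = t ^ ((n+1) * (2*k - (n+1))) / ∏ r ∈ Finset.Icc 1 (n+1), ((r : ℝ) * (2 * k - r)) := by
          have hE : c + n * (2*k - n) + 1 = (n+1) * (2*k - (n+1)) := by
            obtain ⟨m, rfl⟩ : ∃ m, k = n + 1 + m := ⟨k - (n+1), by omega⟩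
            have e1 : n + 1 + m - (n + 1) = m := by omega
            have e2 : 2 * (n + 1 + m) - n = n + 2*m + 2 := by omega
            have e3 : 2 * (n + 1 + m) - (n + 1) = n + 2*m + 1 := by omega
            rw [hc, e1, e2, e3]
            ring
          rw [Finset.prod_Icc_succ_top (by omega : 1 ≤ n + 1), ← hDn, hE]
          have hcast : (((c + n * (2*k - n) : ℕ) : ℝ) + 1) = ((n+1 : ℕ) : ℝ) * (2 * (k:ℝ) - ((n+1 : ℕ) : ℝ)) := by
            rw [show (((c + n * (2*k - n) : ℕ) : ℝ) + 1) = ((c + n * (2*k - n) + 1 : ℕ) : ℝ) by push_cast; ring,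
              hE, Nat.cast_mul, Nat.cast_sub (by omega : n + 1 ≤ 2*k)]
            push_cast
            ring
          rw [hcast, div_div, mul_comm (((n+1 : ℕ) : ℝ) * (2 * (k:ℝ) - ((n+1 : ℕ) : ℝ))) Dn]

-- Part 2 algebra
lemma prodIcc (k : ℕ) (hk : 1 ≤ k) :
    (Nat.factorial (k-1) : ℝ) * ∏ r ∈ Finset.Icc 1 k, ((r : ℝ) * (2 * k - r)) =
      (Nat.factorial k : ℝ) * (Nat.factorial (2*k-1) : ℝ) := by
  have h1 : ∏ r ∈ Finset.Icc 1 k, ((r : ℝ) * (2 * k - r)) =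
      (∏ r ∈ Finset.Icc 1 k, (r:ℝ)) * ∏ r ∈ Finset.Icc 1 k, ((2*k - r : ℕ) : ℝ) := by
    rw [← Finset.prod_mul_distrib]
    refine Finset.prod_congr rfl fun r hr => ?_
    simp only [Finset.mem_Icc] at hr
    have : (r:ℕ) ≤ 2*k := by omega
    rw [Nat.cast_sub this]; push_cast; ring
  have hfac : ∀ n : ℕ, ∏ r ∈ Finset.Icc 1 n, r = Nat.factorial n := by
    intro n; rw [← Finset.Ico_add_one_right_eq_Icc, Finset.prod_Ico_id_eq_factorial]
  have h2 : ∏ r ∈ Finset.Icc 1 k, (2*k - r) = ∏ s ∈ Finset.Ioc (k-1) (2*k-1), s := by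
    apply Finset.prod_nbij' (fun r => 2*k - r) (fun s => 2*k - s)
    · intro a ha; simp only [Finset.mem_Icc] at ha; simp only [Finset.mem_Ioc]; omega
    · intro a ha; simp only [Finset.mem_Ioc] at ha; simp only [Finset.mem_Icc]; omega
    · intro a ha; simp only [Finset.mem_Icc] at ha; omega
    · intro a ha; simp only [Finset.mem_Ioc] at ha; omega
    · intro a _; rfl
  have h3 : (Nat.factorial (k-1)) * ∏ s ∈ Finset.Ioc (k-1) (2*k-1), s = Nat.factorial (2*k-1) := by
    have e0 : ∀ n : ℕ, Finset.Ioc 0 n = Finset.Icc 1 n := fun n => by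
      rw [← Finset.Icc_add_one_left_eq_Ioc]; rfl
    rw [← hfac (k-1), ← hfac (2*k-1), ← e0, ← e0]
    exact Finset.prod_Ioc_consecutive id (Nat.zero_le _) (by omega)
  rw [h1, (Nat.cast_prod (fun r => r) _).symm (α := ℝ)]
  norm_cast
  rw [hfac, h2, ← h3]
  ring
theorem stmt17 (k : ℕ) (hk : 1 ≤ k) :
    (∫ u, ∏ a : Fin k, (u (Tuple.sort u a)) ^ (2 * (k - (a.1 + 1)))
        ∂(Measure.pi fun _ : Fin k => volume.restrict (Set.Icc (0:ℝ) 1))) =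
      (Nat.factorial k : ℝ) / ∏ r ∈ Finset.Icc 1 k, ((r : ℝ) * (2 * k - r)) ∧
    (Nat.factorial k : ℝ) / ∏ r ∈ Finset.Icc 1 k, ((r : ℝ) * (2 * k - r)) =
      (Nat.factorial (k - 1) : ℝ) / Nat.factorial (2 * k - 1) := by
  have hDpos : (0:ℝ) < ∏ r ∈ Finset.Icc 1 k, ((r : ℝ) * (2 * k - r)) := by
    apply Finset.prod_pos
    intro r hr
    simp only [Finset.mem_Icc] at hr
    have h1 : (0:ℝ) < r := by exact_mod_cast hr.1
    have h2 : (r:ℝ) < 2 * k := by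
      have : r < 2 * k := by omega
      exact_mod_cast this
    nlinarith
  constructor
  · -- the integral computation
    set μ : Measure (Fin k → ℝ) := Measure.pi fun _ : Fin k => nu with hμ
    set ee : Fin k → ℕ := fun a => 2 * (k - (a.1 + 1)) with hee
    set f : Equiv.Perm (Fin k) → (Fin k → ℝ) → ℝ :=
      fun σ u => ∏ a : Fin k, u (σ a) ^ ee a with hf
    set g : (Fin k → ℝ) → ℝ := fun u => ∏ a : Fin k, u (Tuple.sort u a) ^ ee a with hg
    set T : Equiv.Perm (Fin k) → Set (Fin k → ℝ) :=
      fun σ => {u | StrictMono (u ∘ σ)} with hT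
    -- measurability of T σ
    have hTm : ∀ σ, MeasurableSet (T σ) := by
      intro σ
      have : T σ = ⋂ (i : Fin k) (j : Fin k) (_ : i < j), {u : Fin k → ℝ | u (σ i) < u (σ j)} := by
        ext u
        simp only [hT, Set.mem_setOf_eq, Set.mem_iInter]
        exact ⟨fun h i j hij => h hij, fun h i j hij => h i j hij⟩
      rw [this]
      exact MeasurableSet.iInter fun i => MeasurableSet.iInter fun j =>
        MeasurableSet.iInter fun _ => measurableSet_lt (measurable_pi_apply _) (measurable_pi_apply _)
    -- pairwise disjoint
    have hdisj : Pairwise (Function.onFun Disjoint T) := by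
      intro σ τ hne
      rw [Function.onFun, Set.disjoint_left]
      intro u huσ huτ
      apply hne
      have hinj : Function.Injective u := by
        intro a b hab
        have h := huσ.injective (a₁ := σ.symm a) (a₂ := σ.symm b)
        simp only [Function.comp_apply, Equiv.apply_symm_apply] at h
        have := h hab
        exact σ.symm.injective this
      have hcomp : u ∘ σ = u ∘ τ := Tuple.unique_monotone huσ.monotone huτ.monotone
      ext i
      exact congrArg Fin.val (hinj (congrFun hcomp i))
    -- a.e. in cube
    have haei : ∀ i : Fin k, ∀ᵐ u ∂μ, u i ∈ Set.Icc (0:ℝ) 1 := by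
      intro i
      have h0 : nu (Set.Icc (0:ℝ) 1)ᶜ = 0 := by
        rw [Measure.restrict_apply (measurableSet_Icc.compl)]
        simp
      have := Measure.pi_eval_preimage_null (μ := fun _ : Fin k => nu) (i := i) h0
      rw [show (Function.eval i ⁻¹' (Set.Icc (0:ℝ) 1)ᶜ) = {u : Fin k → ℝ | u i ∈ Set.Icc (0:ℝ) 1}ᶜ by rfl] at this
      exact mem_ae_iff.mpr this
    have hae : ∀ᵐ u ∂μ, ∀ i, u i ∈ Set.Icc (0:ℝ) 1 := ae_all_iff.mpr haei
    -- pointwise g = f σ on T σ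
    have hfg : ∀ σ : Equiv.Perm (Fin k), ∀ u ∈ T σ, g u = f σ u := by
      intro σ u hu
      have h : u ∘ σ = u ∘ Tuple.sort u := Tuple.comp_sort_eq_comp_iff_monotone.mpr hu.monotone
      refine Finset.prod_congr rfl fun a _ => ?_
      have h2 : u (σ a) = u (Tuple.sort u a) := congrFun h a
      rw [h2]
    -- boundedness of f σ a.e.
    have hfm : ∀ σ, Measurable (f σ) := by
      intro σ
      exact Finset.measurable_prod _ fun a _ => (measurable_pi_apply (σ a)).pow_const _
    have hbd : ∀ σ : Equiv.Perm (Fin k), ∀ u : Fin k → ℝ,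
        (∀ i, u i ∈ Set.Icc (0:ℝ) 1) → ‖f σ u‖ ≤ 1 := by
      intro σ u hu
      rw [Real.norm_eq_abs, hf, Finset.abs_prod]
      apply Finset.prod_le_one
      · intro a _; positivity
      · intro a _
        rw [abs_pow, abs_of_nonneg (hu (σ a)).1]
        exact pow_le_one₀ (hu (σ a)).1 (hu (σ a)).2
    have hIntf : ∀ σ : Equiv.Perm (Fin k), IntegrableOn (f σ) (T σ) μ := by
      intro σ
      apply Measure.integrableOn_of_bounded (M := 1) (measure_ne_top μ _)
        (hfm σ).aestronglyMeasurable
      exact ae_restrict_of_ae (hae.mono fun u hu => hbd σ u hu)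
    have hIntg : ∀ σ : Equiv.Perm (Fin k), IntegrableOn g (T σ) μ := by
      intro σ
      apply (hIntf σ).congr
      rw [Filter.EventuallyEq, ae_restrict_iff' (hTm σ)]
      exact Filter.Eventually.of_forall fun u hu => (hfg σ u hu).symm
    -- complement of union is null
    have hcompl : μ (⋃ σ : Equiv.Perm (Fin k), T σ)ᶜ = 0 := by
      obtain ⟨m, rfl⟩ : ∃ m, k = m + 1 := ⟨k - 1, by omega⟩
      apply measure_mono_null (t := ⋃ (i : Fin (m+1)) (j : Fin (m+1)) (_ : i ≠ j),
        {u : Fin (m+1) → ℝ | u i = u j})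
      · intro u hu
        simp only [Set.mem_compl_iff, Set.mem_iUnion] at hu ⊢
        by_contra hcon
        push_neg at hcon
        have hinj : Function.Injective u := by
          intro a b hab
          by_contra hne
          exact hcon a b hne hab
        apply hu
        refine ⟨Tuple.sort u, ?_⟩
        have : Monotone (u ∘ Tuple.sort u) := Tuple.monotone_sort u
        exact this.strictMono_of_injective (hinj.comp (Tuple.sort u).injective)
      · apply measure_iUnion_null
        intro i
        apply measure_iUnion_null
        intro j
        apply measure_iUnion_null
        intro hij
        exact hyper m i j hij
    -- main chain
    have hU : ∀ᵐ u ∂μ, u ∈ ⋃ σ : Equiv.Perm (Fin k), T σ := by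
      exact mem_ae_iff.mpr hcompl
    have step1 : (∫ u, g u ∂μ) = ∫ u in ⋃ σ : Equiv.Perm (Fin k), T σ, g u ∂μ := by
      rw [Measure.restrict_eq_self_of_ae_mem hU]
    have step2 : (∫ u in ⋃ σ : Equiv.Perm (Fin k), T σ, g u ∂μ)
        = ∑ σ : Equiv.Perm (Fin k), ∫ u in T σ, g u ∂μ :=
      integral_iUnion_fintype hTm hdisj hIntg
    have step3 : ∀ σ : Equiv.Perm (Fin k), (∫ u in T σ, g u ∂μ) = ∫ u in T σ, f σ u ∂μ := by
      intro σ
      exact setIntegral_congr_fun (hTm σ) fun u hu => hfg σ u hu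
    -- transfer to identity permutation
    have step4 : ∀ σ : Equiv.Perm (Fin k), (∫ u in T σ, f σ u ∂μ) = ∫ u in T 1, f 1 u ∂μ := by
      intro σ
      set E : (Fin k → ℝ) ≃ᵐ (Fin k → ℝ) :=
        MeasurableEquiv.piCongrLeft (fun _ : Fin k => ℝ) σ.symm with hEdef
      have hEapp : ∀ u : Fin k → ℝ, E u = u ∘ σ := by
        intro u
        funext a
        simp [hEdef, MeasurableEquiv.piCongrLeft, Equiv.piCongrLeft, Equiv.piCongrLeft']
      have hmp : MeasurePreserving E μ μ := measurePreserving_piCongrLeft (fun _ => nu) σ.symm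
      have h := hmp.setIntegral_preimage_emb E.measurableEmbedding (f 1) (T 1)
      have hpre : E ⁻¹' (T 1) = T σ := by
        ext u
        simp only [Set.mem_preimage, hT, Set.mem_setOf_eq, hEapp u, Equiv.Perm.coe_one,
          Function.comp_id, CompTriple.comp_eq]
      have hcompf : ∀ u, f 1 (E u) = f σ u := by
        intro u
        rw [hf]
        refine Finset.prod_congr rfl fun a _ => ?_
        rw [hEapp u]
        simp
      rw [← h, hpre]
      exact setIntegral_congr_fun (hTm σ) fun u _ => (hcompf u).symm
    -- evaluate identity-permutation integral via claim
    have step5 : (∫ u in T 1, f 1 u ∂μ)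
        = 1 / ∏ r ∈ Finset.Icc 1 k, ((r : ℝ) * (2 * k - r)) := by
      have hT1 : T 1 = {u : Fin k → ℝ | StrictMono u} := by
        ext u
        simp [hT]
      have h0 : (∫ u in T 1, f 1 u ∂μ) = ∫ u, (T 1).indicator (f 1) u ∂μ := by
        rw [integral_indicator (hTm 1)]
      rw [h0]
      have hclaim := claim k k le_rfl 1 ⟨zero_le_one, le_rfl⟩
      rw [one_pow] at hclaim
      rw [← hclaim]
      apply integral_congr_ae
      have hne0 : ∀ᵐ u ∂μ, ∀ i : Fin k, u i ≠ 0 :=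
        ae_all_iff.mpr fun i => Measure.ae_eval_ne _ i 0
      have hne1 : ∀ᵐ u ∂μ, ∀ i : Fin k, u i ≠ 1 :=
        ae_all_iff.mpr fun i => Measure.ae_eval_ne _ i 1
      filter_upwards [hae, hne0, hne1] with u hu h0' h1'
      have hIoo : (∀ i : Fin k, u i ∈ Set.Ioo (0:ℝ) 1) := by
        intro i
        exact ⟨lt_of_le_of_ne (hu i).1 (Ne.symm (h0' i)), lt_of_le_of_ne (hu i).2 (h1' i)⟩
      have hfeq : ∀ w : Fin k → ℝ, f 1 w = ∏ i : Fin k, w i ^ (2 * (k - (i.1 + 1))) := by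
        intro w
        rw [hf]
        exact Finset.prod_congr rfl fun a _ => by simp [hee]
      by_cases hsm : StrictMono u
      · rw [Set.indicator_of_mem (by rw [hT1]; exact hsm),
          Set.indicator_of_mem (Set.mem_setOf_eq ▸ ⟨hsm, hIoo⟩)]
        exact hfeq u
      · rw [Set.indicator_of_notMem (by rw [hT1]; exact hsm),
          Set.indicator_of_notMem (fun hh => hsm hh.1)]
    -- combine
    calc (∫ u, g u ∂μ) = ∑ σ : Equiv.Perm (Fin k), ∫ u in T σ, g u ∂μ := by
          rw [step1, step2]
      _ = ∑ σ : Equiv.Perm (Fin k), ∫ u in T 1, f 1 u ∂μ := by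
          exact Finset.sum_congr rfl fun σ _ => by rw [step3 σ, step4 σ]
      _ = (Nat.factorial k : ℝ) * (1 / ∏ r ∈ Finset.Icc 1 k, ((r : ℝ) * (2 * k - r))) := by
          rw [Finset.sum_const, step5]
          simp [Fintype.card_perm, nsmul_eq_mul]
      _ = (Nat.factorial k : ℝ) / ∏ r ∈ Finset.Icc 1 k, ((r : ℝ) * (2 * k - r)) := by
          rw [mul_one_div]
  · -- algebraic identity
    have h := prodIcc k hk
    have hD : (∏ r ∈ Finset.Icc 1 k, ((r : ℝ) * (2 * k - r))) ≠ 0 := ne_of_gt hDpos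
    have hf1 : (Nat.factorial (2*k-1) : ℝ) ≠ 0 := by
      exact_mod_cast Nat.factorial_ne_zero _
    rw [div_eq_div_iff hD hf1]
    linarith [h]
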